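/- Let the posterior density be p(u) ∝ exp(-E(u)) with E(u) = ½‖Ku - f‖²_{Σ⁻¹} + λJ(u), J convex and differentiable, E having a minimizer û_MAP, and suppose ∫∇p(u)du = 0 and all relevant integrals are finite. Then û_MAP minimizes the Bayes cost û ↦ ∫ (‖K(û-u)‖²_{Σ⁻¹} + 2λ D_J(û,u)) p(u) du, where D_J(û,u) = J(û) - J(u) - ⟨∇J(u), û - u⟩. -/

import Mathlib

open RealInnerProductSpace MeasureTheory

set_option maxHeartbeats 1000000

lemma bregman_aux {F : Type*} [NormedAddCommGroup F] [InnerProductSpace ℝ F] [CompleteSpace F]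
    (J : F → ℝ) (hJconv : ConvexOn ℝ Set.univ J) {x : F} (hx : DifferentiableAt ℝ J x)
    (y : F) : J x + ⟪gradient J x, y - x⟫ ≤ J y := by
  set d := y - x with hd
  have hline : HasDerivAt (fun t : ℝ => x + t • d) d 0 := by
    simpa using ((hasDerivAt_id (0:ℝ)).smul_const d).const_add x
  have hg : HasDerivAt (fun t : ℝ => J (x + t • d)) ⟪gradient J x, d⟫ 0 := by
    have h1 : HasFDerivAt J (InnerProductSpace.toDual ℝ F (gradient J x))
        ((fun t : ℝ => x + t • d) 0) := by
      simpa using hx.hasGradientAt.hasFDerivAt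
    have h2 := h1.comp_hasDerivAt (0:ℝ) hline
    simpa [InnerProductSpace.toDual_apply_apply, Function.comp_def] using h2
  have hslope : Filter.Tendsto (slope (fun t : ℝ => J (x + t • d)) 0) (nhdsWithin 0 (Set.Ioi 0))
      (nhds ⟪gradient J x, d⟫) :=
    (hasDerivAt_iff_tendsto_slope.mp hg).mono_left
      (nhdsWithin_mono _ (fun t ht => ne_of_gt ht))
  have hev : ∀ᶠ t in nhdsWithin (0:ℝ) (Set.Ioi 0),
      slope (fun t : ℝ => J (x + t • d)) 0 t ≤ J y - J x := by
    filter_upwards [Ioo_mem_nhdsGT_of_mem (Set.mem_Ico.mpr ⟨le_refl 0, zero_lt_one⟩)] with t ht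
    obtain ⟨ht0, ht1⟩ := ht
    have hcomb : x + t • d = (1 - t) • x + t • y := by
      rw [hd]; rw [smul_sub, sub_smul, one_smul]; abel
    have hconv := hJconv.2 (Set.mem_univ x) (Set.mem_univ y)
      (by linarith : (0:ℝ) ≤ 1 - t) (le_of_lt ht0) (by ring)
    rw [slope_def_field]
    have : J (x + t • d) ≤ (1 - t) * J x + t * J y := by
      rw [hcomb]; simpa [smul_eq_mul] using hconv
    simp only [zero_smul, add_zero, smul_eq_mul, sub_zero, div_eq_iff] at *
    rw [div_le_iff₀ ht0]
    nlinarith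
  have := le_of_tendsto hslope hev
  linarith

theorem map_minimizes_bregman_cost {n m : ℕ}
    (K : EuclideanSpace ℝ (Fin n) →ₗ[ℝ] EuclideanSpace ℝ (Fin m))
    (S : EuclideanSpace ℝ (Fin m) →ₗ[ℝ] EuclideanSpace ℝ (Fin m))
    (hSsym : ∀ y z, ⟪S y, z⟫ = ⟪y, S z⟫)
    (hSpos : ∀ y, y ≠ 0 → 0 < ⟪y, S y⟫)
    (f : EuclideanSpace ℝ (Fin m)) (lam : ℝ) (hlam : 0 < lam)
    (J : EuclideanSpace ℝ (Fin n) → ℝ)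
    (hJconv : ConvexOn ℝ Set.univ J) (hJC1 : ContDiff ℝ 1 J)
    -- the posterior energy and density
    (E : EuclideanSpace ℝ (Fin n) → ℝ)
    (hE : ∀ u, E u = (1/2) * ⟪K u - f, S (K u - f)⟫ + lam * J u)
    (Z : ℝ) (hZ : 0 < Z)
    (p : EuclideanSpace ℝ (Fin n) → ℝ)
    (hp : ∀ u, p u = Z⁻¹ * Real.exp (-E u))
    (hprob : ∫ u, p u = 1)
    -- vanishing integral of the gradient of the density
    (hgradp : ∫ u, gradient p u = 0)
    -- finiteness of all relevant integrals
    (hmom2 : Integrable (fun u => ‖u‖^2 * p u))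
    (hmom1 : Integrable (fun u => p u • u))
    (hJint : Integrable (fun u => |J u| * p u))
    (hgJint : Integrable (fun u => ‖gradient J u‖ * p u))
    (hcost : ∀ uhat, Integrable (fun u =>
        (⟪K (uhat - u), S (K (uhat - u))⟫
          + 2 * lam * (J uhat - J u - ⟪gradient J u, uhat - u⟫)) * p u))
    -- the MAP estimate
    (uMAP : EuclideanSpace ℝ (Fin n)) (hMAP : ∀ u, E uMAP ≤ E u) :
    ∀ uhat : EuclideanSpace ℝ (Fin n),
      (∫ u, (⟪K (uMAP - u), S (K (uMAP - u))⟫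
          + 2 * lam * (J uMAP - J u - ⟪gradient J u, uMAP - u⟫)) * p u)
        ≤ ∫ u, (⟪K (uhat - u), S (K (uhat - u))⟫
          + 2 * lam * (J uhat - J u - ⟪gradient J u, uhat - u⟫)) * p u := by
  intro uhat
  set G : EuclideanSpace ℝ (Fin n) → EuclideanSpace ℝ (Fin n) :=
    fun u => LinearMap.adjoint K (S (K u - f)) + lam • gradient J u with hG
  have hJdiff : ∀ u, DifferentiableAt ℝ J u := fun u =>
    (hJC1.differentiable one_ne_zero).differentiableAt
  -- derivative of E
  have hEderiv : ∀ u, HasFDerivAt E (InnerProductSpace.toDual ℝ _ (G u)) u := by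
    intro u
    set Kc := LinearMap.toContinuousLinearMap K with hKc
    set Sc := LinearMap.toContinuousLinearMap S with hSc
    have hK : HasFDerivAt (fun v => K v - f) Kc u := (Kc.hasFDerivAt).sub_const f
    have hSK : HasFDerivAt (fun v => S (K v - f)) (Sc.comp Kc) u :=
      Sc.hasFDerivAt.comp u hK
    have hq := (hK.inner (𝕜 := ℝ) hSK).const_mul (1/2 : ℝ)
    have hJf := (hJdiff u).hasGradientAt.hasFDerivAt.const_mul lam
    have hsum := hq.add hJf
    have heq : ((1/2 : ℝ) • ((fderivInnerCLM ℝ ((fun v => K v - f) u, (fun v => S (K v - f)) u)).comp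
          (Kc.prod (Sc.comp Kc))) + lam • (InnerProductSpace.toDual ℝ _ (gradient J u)))
        = InnerProductSpace.toDual ℝ _ (G u) := by
      ext h
      simp only [ContinuousLinearMap.add_apply, ContinuousLinearMap.smul_apply,
        ContinuousLinearMap.comp_apply, ContinuousLinearMap.prod_apply, fderivInnerCLM_apply,
        InnerProductSpace.toDual_apply_apply, hG, inner_add_left, inner_smul_left,
        LinearMap.coe_toContinuousLinearMap', RingHom.id_apply, smul_eq_mul,
        LinearMap.adjoint_inner_left, RCLike.star_def, conj_trivial]
      have e1 : Sc (Kc h) = S (K h) := rfl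
      have e2 : (Kc h : EuclideanSpace ℝ (Fin m)) = K h := rfl
      rw [e1, e2, ← hSsym (K u - f) (K h), real_inner_comm (S (K u - f)) (K h)]
      ring
    have hEfun : E = fun v => (1/2) * ⟪K v - f, S (K v - f)⟫ + lam * J v := funext hE
    rw [← heq, hEfun]
    exact hsum
  -- gradient of p
  have hpgrad : ∀ u, gradient p u = -(p u • G u) := by
    intro u
    have h1 : HasDerivAt (fun t : ℝ => Z⁻¹ * Real.exp (-t))
        (Z⁻¹ * (Real.exp (-(E u)) * (-1))) (E u) :=
      (((hasDerivAt_id (E u)).neg).exp).const_mul Z⁻¹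
    have h2 := h1.comp_hasFDerivAt u (hEderiv u)
    have h3 : HasFDerivAt p ((Z⁻¹ * (Real.exp (-(E u)) * (-1))) •
        InnerProductSpace.toDual ℝ _ (G u)) u := by
      have hpfun : p = (fun t : ℝ => Z⁻¹ * Real.exp (-t)) ∘ E := funext hp
      rw [hpfun]; exact h2
    have h4 : ((Z⁻¹ * (Real.exp (-(E u)) * (-1))) • InnerProductSpace.toDual ℝ _ (G u))
        = InnerProductSpace.toDual ℝ _ (-(p u • G u)) := by
      rw [← _root_.map_smul]
      congr 1
      rw [hp u]
      module
    rw [h4] at h3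
    simpa using h3.hasGradientAt.gradient
  -- p is continuous, positive, integrable
  have hppos : ∀ u, 0 < p u := fun u => by
    rw [hp u]; positivity
  have hpInt : Integrable p := by
    by_contra h
    rw [integral_undef h] at hprob
    norm_num at hprob
  have hEcont : Continuous E :=
    continuous_iff_continuousAt.mpr fun u => (hEderiv u).continuousAt
  have hpcont : Continuous p := by
    have : Continuous fun u => Z⁻¹ * Real.exp (-E u) := by fun_prop
    simpa [← funext hp] using this
  have hgJcont : Continuous (gradient J) := by
    have h1 : Continuous (fderiv ℝ J) := hJC1.continuous_fderiv one_ne_zero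
    exact (InnerProductSpace.toDual ℝ _).symm.continuous.comp h1
  -- integrability of p • G
  have hIntPG : Integrable (fun u => p u • G u) := by
    set L := LinearMap.toContinuousLinearMap
      ((LinearMap.adjoint K).comp (S.comp K)) with hL
    have hfun : (fun u => p u • G u) = fun u =>
        (L (p u • u) - p u • (LinearMap.adjoint K (S f))) + lam • (p u • gradient J u) := by
      funext u
      have : L (p u • u) = p u • LinearMap.adjoint K (S (K u)) := by
        simp [hL, LinearMap.map_smul]
      rw [this, hG]
      simp only [map_sub, smul_add, smul_sub]
      rw [smul_comm lam (p u) (gradient J u)]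
    rw [hfun]
    have hforms : Integrable (fun u => p u • gradient J u) := by
      apply Integrable.mono' hgJint ((hpcont.smul hgJcont).aestronglyMeasurable)
      filter_upwards with u
      show ‖p u • gradient J u‖ ≤ _
      rw [norm_smul, Real.norm_eq_abs, abs_of_pos (hppos u), mul_comm]
    exact ((L.integrable_comp hmom1).sub (hpInt.smul_const _)).add (hforms.smul lam)
  -- the vanishing moment identity
  have hPG : (∫ u, p u • G u) = 0 := by
    have hfun : (fun u => gradient p u) = fun u => -(p u • G u) := funext hpgrad
    rw [hfun, integral_neg] at hgradp
    exact neg_eq_zero.mp hgradp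
  -- first order condition at MAP
  have hMAP0 : LinearMap.adjoint K (S (K uMAP - f)) = -(lam • gradient J uMAP) := by
    have hloc : IsLocalMin E uMAP := Filter.Eventually.of_forall hMAP
    have h0 := hloc.hasFDerivAt_eq_zero (hEderiv uMAP)
    have hG0 : G uMAP = 0 := by
      apply (InnerProductSpace.toDual ℝ (EuclideanSpace ℝ (Fin n))).injective
      rw [h0]; simp
    rw [hG] at hG0
    simp only at hG0
    exact eq_neg_of_add_eq_zero_left hG0
  set d := uhat - uMAP with hd
  set c : ℝ := ⟪K d, S (K d)⟫ + 2*⟪K d, S (K uMAP - f)⟫ + 2*lam*(J uhat - J uMAP) with hc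
  -- pointwise identity
  have key : ∀ u, (⟪K (uhat - u), S (K (uhat - u))⟫
          + 2 * lam * (J uhat - J u - ⟪gradient J u, uhat - u⟫)) * p u
        - (⟪K (uMAP - u), S (K (uMAP - u))⟫
          + 2 * lam * (J uMAP - J u - ⟪gradient J u, uMAP - u⟫)) * p u
        = c * p u - 2 * ⟪d, p u • G u⟫ := by
    intro u
    have e1 : uhat - u = d + (uMAP - u) := by rw [hd]; abel
    have hGd : ⟪d, G u⟫ = ⟪K d, S (K u)⟫ - ⟪K d, S f⟫ + lam * ⟪gradient J u, d⟫ := by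
      rw [hG]
      simp only [inner_add_right, real_inner_smul_right, LinearMap.adjoint_inner_right,
        map_sub, inner_sub_right]
      rw [real_inner_comm d (gradient J u)]
    have hsym1 : ⟪K (uMAP - u), S (K d)⟫ = ⟪K d, S (K (uMAP - u))⟫ := by
      rw [← hSsym, real_inner_comm]
    have hsplit : ⟪K (uhat - u), S (K (uhat - u))⟫ = ⟪K d, S (K d)⟫
        + 2*⟪K d, S (K (uMAP - u))⟫ + ⟪K (uMAP - u), S (K (uMAP - u))⟫ := by
      rw [e1, map_add, map_add, inner_add_left, inner_add_right, inner_add_right, hsym1]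
      ring
    have hKuM : ⟪K d, S (K (uMAP - u))⟫ = ⟪K d, S (K uMAP)⟫ - ⟪K d, S (K u)⟫ := by
      rw [show K (uMAP - u) = K uMAP - K u from map_sub K _ _,
        show S (K uMAP - K u) = S (K uMAP) - S (K u) from map_sub S _ _, inner_sub_right]
    have hcterm : ⟪K d, S (K uMAP - f)⟫ = ⟪K d, S (K uMAP)⟫ - ⟪K d, S f⟫ := by
      rw [show S (K uMAP - f) = S (K uMAP) - S f from map_sub S _ _, inner_sub_right]
    have hJterm : ⟪gradient J u, uhat - u⟫ = ⟪gradient J u, d⟫ + ⟪gradient J u, uMAP - u⟫ := by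
      rw [e1, inner_add_right]
    have hinner2 : ⟪d, p u • G u⟫ = p u * ⟪d, G u⟫ := real_inner_smul_right _ _ _
    rw [hsplit, hKuM, hJterm, hinner2, hGd, hc, hcterm]
    ring
  -- integrate the identity
  have hIntInner : Integrable (fun u => ⟪d, p u • G u⟫) := by
    have := (innerSL ℝ d).integrable_comp hIntPG
    exact this
  have hIntEq : (∫ u, (⟪K (uhat - u), S (K (uhat - u))⟫
          + 2 * lam * (J uhat - J u - ⟪gradient J u, uhat - u⟫)) * p u)
      - (∫ u, (⟪K (uMAP - u), S (K (uMAP - u))⟫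
          + 2 * lam * (J uMAP - J u - ⟪gradient J u, uMAP - u⟫)) * p u) = c := by
    rw [← integral_sub (hcost uhat) (hcost uMAP)]
    have hfun : (fun u => (⟪K (uhat - u), S (K (uhat - u))⟫
          + 2 * lam * (J uhat - J u - ⟪gradient J u, uhat - u⟫)) * p u
        - (⟪K (uMAP - u), S (K (uMAP - u))⟫
          + 2 * lam * (J uMAP - J u - ⟪gradient J u, uMAP - u⟫)) * p u)
        = fun u => c * p u - 2 * ⟪d, p u • G u⟫ := funext key
    rw [hfun, integral_sub (hpInt.const_mul c) (hIntInner.const_mul 2),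
      integral_const_mul, integral_const_mul, hprob]
    have : (∫ u, ⟪d, p u • G u⟫) = ⟪d, ∫ u, p u • G u⟫ :=
      (innerSL ℝ d).integral_comp_comm hIntPG
    rw [this, hPG]
    simp
  -- nonnegativity of c
  have hcnn : 0 ≤ c := by
    have h1 : (0:ℝ) ≤ ⟪K d, S (K d)⟫ := by
      rcases eq_or_ne (K d) 0 with h | h
      · simp [h]
      · exact le_of_lt (hSpos _ h)
    have h2 : ⟪K d, S (K uMAP - f)⟫ = -(lam * ⟪gradient J uMAP, d⟫) := by
      rw [← LinearMap.adjoint_inner_right, hMAP0]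
      rw [inner_neg_right, real_inner_smul_right]
      rw [real_inner_comm d (gradient J uMAP)]
    have h3 : J uMAP + ⟪gradient J uMAP, uhat - uMAP⟫ ≤ J uhat :=
      bregman_aux J hJconv (hJdiff uMAP) uhat
    rw [hc, h2]
    rw [hd] at *
    nlinarith [mul_le_mul_of_nonneg_left (sub_nonneg.mpr h3) (le_of_lt hlam)]
  linarith
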